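/- If A is an abelian group with Hom_ℤ(A, ℤ) = 0 and Ext¹_ℤ(A, ℤ) = 0, then A is divisible by every prime: for every prime p and every a ∈ A there exists b ∈ A with p·b = a. -/

import Mathlib

open CategoryTheory

private lemma helper_dual (F V : Type) [Field F] [AddCommGroup V] [Module F V]
    (x : V) (hx : x ≠ 0) : ∃ φ : V →ₗ[F] F, φ x ≠ 0 := by
  by_contra hall
  push_neg at hall
  exact hx ((Module.forall_dual_apply_eq_zero_iff F x).1 hall)

private lemma helper_div {M : Type} [AddCommGroup M] [Module ℤ M] (k : M →ₗ[ℤ] ℤ) {p : ℤ}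
    (hp : p ≠ 0) (hdvd : ∀ y, p ∣ k y) : ∃ h : M →ₗ[ℤ] ℤ, ∀ y, p * h y = k y := by
  have hc : ∀ y, p * (k y / p) = k y := fun y => Int.mul_ediv_cancel' (hdvd y)
  refine ⟨⟨⟨fun y => k y / p, ?_⟩, ?_⟩, hc⟩
  · intro y z
    apply mul_left_cancel₀ hp
    rw [mul_add, hc, hc, hc, map_add]
  · intro r y
    dsimp only
    rw [RingHom.id_apply, smul_eq_mul]
    apply mul_left_cancel₀ hp
    rw [hc, LinearMap.map_smul, smul_eq_mul, mul_left_comm, hc]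

private lemma helper_descend {M A : Type} [AddCommGroup M] [AddCommGroup A]
    (σ : M →+ A) (hσ : Function.Surjective σ) (w0 : M →+ ℤ)
    (hker : ∀ x, σ x = 0 → w0 x = 0) : ∃ w : A →+ ℤ, ∀ x, w (σ x) = w0 x := by
  refine ⟨σ.liftOfRightInverse (Function.surjInv hσ) (Function.rightInverse_surjInv hσ)
    ⟨w0, fun x hx => hker x hx⟩, fun x => ?_⟩
  exact σ.liftOfRightInverse_comp_apply _ _ _ x

/-- If `A` is an abelian group with `Hom_ℤ(A, ℤ) = 0` and `Ext¹_ℤ(A, ℤ) = 0`,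
then `A` is divisible by every prime. -/
theorem divisible_of_hom_int_trivial_of_ext_int_trivial
    (A : Type) [AddCommGroup A]
    (hHom : ∀ f : A →+ ℤ, f = 0)
    (hExt : Subsingleton
      (((Ext ℤ (ModuleCat ℤ) 1).obj (Opposite.op (ModuleCat.of ℤ A))).obj (ModuleCat.of ℤ ℤ))) :
    ∀ p : ℕ, p.Prime → ∀ a : A, ∃ b : A, p • b = a := by
  classical
  intro p hp a
  by_contra hcon
  push_neg at hcon
  haveI : Fact p.Prime := ⟨hp⟩
  have hpz : ((p : ℤ)) ≠ 0 := by exact_mod_cast hp.ne_zero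
  -- construct fbar : A →+ ZMod p with fbar a ≠ 0
  obtain ⟨fbar, hfa⟩ : ∃ f : A →+ ZMod p, f a ≠ 0 := by
    set Q : Submodule ℤ A := LinearMap.range ((p : ℤ) • (LinearMap.id : A →ₗ[ℤ] A)) with hQ
    letI iM : Module (ZMod p) (A ⧸ Q) := AddCommGroup.zmodModule (n := p) (by
      intro x
      obtain ⟨y, rfl⟩ := Submodule.Quotient.mk_surjective Q x
      rw [← Submodule.mkQ_apply, ← map_nsmul, Submodule.mkQ_apply,
        Submodule.Quotient.mk_eq_zero]
      exact ⟨y, by simp [natCast_zsmul]⟩)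
    have hane : Q.mkQ a ≠ 0 := by
      simp only [Submodule.mkQ_apply, ne_eq, Submodule.Quotient.mk_eq_zero]
      rintro ⟨b, hb⟩
      simp only [LinearMap.smul_apply, LinearMap.id_coe, id_eq, natCast_zsmul] at hb
      exact hcon b hb
    obtain ⟨φ, hφ⟩ := @helper_dual (ZMod p) (A ⧸ Q) _ _ iM (Q.mkQ a) hane
    exact ⟨AddMonoidHom.comp (LinearMap.toAddMonoidHom φ) (LinearMap.toAddMonoidHom Q.mkQ), hφ⟩
  -- set up the projective resolution
  set MA : ModuleCat ℤ := ModuleCat.of ℤ A with hMA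
  set MZ : ModuleCat ℤ := ModuleCat.of ℤ ℤ with hMZ
  set Mp : ModuleCat ℤ := ModuleCat.of ℤ (ZMod p) with hMp
  let P : ProjectiveResolution MA := ProjectiveResolution.of MA
  -- Ext vanishing gives exactness of the Hom complex at degree 1
  have hz : Limits.IsZero ((P.complex.linearYonedaObj ℤ MZ).homology 1) := by
    haveI := hExt
    exact (ModuleCat.isZero_of_subsingleton _).of_iso (P.isoExt 1 MZ).symm
  have hex : (P.complex.linearYonedaObj ℤ MZ).ExactAt 1 :=
    (HomologicalComplex.exactAt_iff_isZero_homology _ 1).2 hz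
  have hex2 : ((P.complex.linearYonedaObj ℤ MZ).sc' 0 1 2).Exact :=
    (HomologicalComplex.exactAt_iff' _ 0 1 2 (by simp) (by simp)).1 hex
  have key : ∀ h : P.complex.X 1 ⟶ MZ, P.complex.d 2 1 ≫ h = 0 →
      ∃ e : P.complex.X 0 ⟶ MZ, P.complex.d 1 0 ≫ e = h := by
    intro h hh
    have hmex := (ShortComplex.moduleCat_exact_iff _).1 hex2
    obtain ⟨e, he⟩ := hmex h (by
      show (Linear.leftComp ℤ MZ (P.complex.d 2 1)) h = 0
      rw [Linear.leftComp_apply]; exact hh)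
    exact ⟨e, he⟩
  -- the epimorphism σ : P₀ → A whose kernel is the image of d 1 0
  let σ : P.complex.X 0 ⟶ MA := P.π.f 0
  have hσ0 : P.complex.d 1 0 ≫ σ = 0 := P.complex_d_comp_π_f_zero
  have hσexact : (ShortComplex.mk (P.complex.d 1 0) σ hσ0).Exact :=
    ShortComplex.exact_of_g_is_cokernel _ P.isColimitCokernelCofork
  have hker : ∀ x : P.complex.X 0, σ x = 0 → ∃ y, P.complex.d 1 0 y = x :=
    fun x hx => (ShortComplex.moduleCat_exact_iff _).1 hσexact x hx
  haveI hepi : Epi σ := inferInstanceAs (Epi (P.π.f 0))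
  have hσsurj : Function.Surjective σ := (ModuleCat.epi_iff_surjective σ).1 hepi
  -- lift fbar ∘ σ along ℤ → ZMod p using projectivity of P₀
  let c : MZ ⟶ Mp := ModuleCat.ofHom (Int.castAddHom (ZMod p)).toIntLinearMap
  haveI : Epi c := (ModuleCat.epi_iff_surjective c).2 ZMod.intCast_surjective
  let fb : MA ⟶ Mp := ModuleCat.ofHom fbar.toIntLinearMap
  haveI : Projective (P.complex.X 0) := P.projective 0
  let g : P.complex.X 0 ⟶ MZ := Projective.factorThru (σ ≫ fb) c
  have hgc : g ≫ c = σ ≫ fb := Projective.factorThru_comp _ _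
  -- k = d 1 0 ≫ g has image divisible by p
  let k : P.complex.X 1 ⟶ MZ := P.complex.d 1 0 ≫ g
  have hdvd : ∀ y : P.complex.X 1, (p : ℤ) ∣ (show ℤ from k y) := by
    intro y
    have h1 : σ (P.complex.d 1 0 y) = 0 := ConcreteCategory.congr_hom hσ0 y
    have h2 : ((show ℤ from k y : ℤ) : ZMod p) = 0 := by
      have h3 : c (g (P.complex.d 1 0 y)) = fb (σ (P.complex.d 1 0 y)) :=
        ConcreteCategory.congr_hom hgc (P.complex.d 1 0 y)
      rw [h1, map_zero] at h3
      exact h3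
    exact (ZMod.intCast_zmod_eq_zero_iff_dvd _ p).1 h2
  obtain ⟨hL, hph⟩ := @helper_div (↑(P.complex.X 1)) ((P.complex.X 1).isAddCommGroup)
    ((P.complex.X 1).isModule) k.hom (p : ℤ) hpz hdvd
  let h : P.complex.X 1 ⟶ MZ := ModuleCat.ofHom hL
  have hh : P.complex.d 2 1 ≫ h = 0 := by
    apply ModuleCat.hom_ext
    apply LinearMap.ext
    intro y
    have h2 : P.complex.d 1 0 (P.complex.d 2 1 y) = 0 :=
      ConcreteCategory.congr_hom (P.complex.d_comp_d 2 1 0) y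
    have h1 : (show ℤ from k (P.complex.d 2 1 y)) = 0 := by
      show (show ℤ from g (P.complex.d 1 0 (P.complex.d 2 1 y))) = 0
      rw [h2]
      exact map_zero g.hom
    have h3 : hL (P.complex.d 2 1 y) = 0 := by
      apply mul_left_cancel₀ hpz
      rw [hph, mul_zero]
      exact h1
    exact h3
  obtain ⟨e, he⟩ := key h hh
  -- w0 = g - p • e vanishes on ker σ and descends to A, where it must vanish
  let w0 : P.complex.X 0 ⟶ MZ := g - (p : ℤ) • e
  have hw0ker : ∀ x, σ x = 0 → (show ℤ from w0 x) = 0 := by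
    intro x hx
    obtain ⟨y, rfl⟩ := hker x hx
    have h4 : (show ℤ from e (P.complex.d 1 0 y)) = hL y := ConcreteCategory.congr_hom he y
    have h6 : (show ℤ from w0 (P.complex.d 1 0 y)) =
        (show ℤ from g (P.complex.d 1 0 y)) - (p : ℤ) * (show ℤ from e (P.complex.d 1 0 y)) :=
      rfl
    have h5 : (show ℤ from g (P.complex.d 1 0 y)) = (p : ℤ) * hL y := (hph y).symm
    rw [h6, h4, h5]
    ring
  let σadd : (↑(P.complex.X 0) : Type) →+ A :=
    AddMonoidHom.mk' (fun x => (show A from σ x)) (fun x y => map_add σ.hom x y)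
  let w0add : (↑(P.complex.X 0) : Type) →+ ℤ :=
    AddMonoidHom.mk' (fun x => (show ℤ from w0 x)) (fun x y => map_add w0.hom x y)
  obtain ⟨w, hwval⟩ := helper_descend σadd hσsurj w0add hw0ker
  have hge : ∀ x, (show ℤ from g x) = (p : ℤ) * (show ℤ from e x) := by
    intro x
    have h7 : (show ℤ from w0 x) = 0 := by
      have h8 := hwval x
      rw [hHom w] at h8
      exact h8.symm.trans rfl
    have h9 : (show ℤ from w0 x) =
        (show ℤ from g x) - (p : ℤ) * (show ℤ from e x) := rfl
    rw [h9] at h7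
    linarith
  -- conclude fbar a = 0, a contradiction
  obtain ⟨x, hx⟩ := hσsurj a
  apply hfa
  have h10 : ((show ℤ from g x : ℤ) : ZMod p) = fbar a := by
    have h11 : c (g x) = fb (σ x) := ConcreteCategory.congr_hom hgc x
    rw [hx] at h11
    exact h11
  rw [hge x] at h10
  rw [← h10]
  push_cast
  simp [ZMod.natCast_self]
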